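/- Let K = F₂(X) be the field of rational functions in one variable over the field with two elements, and define the equivalence relation ~₂ on K* by t ~₂ t' iff t + t' = x² + x for some x ∈ K. Then for all natural numbers i ≠ j one has X^{2i+1} ≁₂ X^{2j+1}; consequently ~₂ has countably infinitely many equivalence classes on K*. -/

import Mathlib

/-- Multiplication of the 2-dimensional algebra `S(p,q,a,b,c,d)` on `K × K`,
with basis `e = (1,0)`, `f = (0,1)` and table
`e*e = f`, `f*f = p•e + q•f`, `e*f = a•e + b•f`, `f*e = c•e + d•f`. -/
def mulS {K : Type*} [Field K] (p q a b c d : K) (u v : K × K) : K × K :=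
  (u.1 * v.2 * a + u.2 * v.1 * c + u.2 * v.2 * p,
   u.1 * v.1 + u.1 * v.2 * b + u.2 * v.1 * d + u.2 * v.2 * q)

/-- `S(p,q,a,b,c,d)` is endo-commutative: `(x*x)*(y*y) = (x*y)*(x*y)`. -/
def EndoComm {K : Type*} [Field K] (p q a b c d : K) : Prop :=
  ∀ u v : K × K,
    mulS p q a b c d (mulS p q a b c d u u) (mulS p q a b c d v v) =
      mulS p q a b c d (mulS p q a b c d u v) (mulS p q a b c d u v)

/-- `S(p,q,a,b,c,d)` and `S(p',q',a',b',c',d')` are isomorphic: there is a bijective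
`K`-linear map between them preserving multiplication. -/
def IsoS {K : Type*} [Field K] (p q a b c d p' q' a' b' c' d' : K) : Prop :=
  ∃ φ : (K × K) ≃ₗ[K] (K × K),
    ∀ u v : K × K,
      φ (mulS p q a b c d u v) = mulS p' q' a' b' c' d' (φ u) (φ v)

/-- The relation `~₂` on `K*` for `char K = 2`: `t ~₂ t'` iff `t + t' = x² + x`
for some `x ∈ K`. -/
def rel2F (t t' : RatFunc (ZMod 2)) : Prop :=
  ∃ x : RatFunc (ZMod 2), t + t' = x ^ 2 + x

open Polynomial

lemma poly_key (n : Polynomial (ZMod 2)) (i j : ℕ) (hij : j < i) :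
    (Polynomial.X : Polynomial (ZMod 2)) ^ (2*i+1) + Polynomial.X ^ (2*j+1) * 1 ^ 2
      = n ^ 2 + n * 1 → False := by
  intro h
  rw [one_pow, mul_one, mul_one] at h
  have hdP : ((Polynomial.X : Polynomial (ZMod 2)) ^ (2*i+1) + Polynomial.X ^ (2*j+1)).natDegree
      = 2*i+1 := by
    rw [natDegree_add_eq_left_of_natDegree_lt (by
      simp only [natDegree_X_pow]; omega), natDegree_X_pow]
  rcases Nat.eq_zero_or_pos n.natDegree with h0 | hpos
  · obtain ⟨c, rfl⟩ := natDegree_eq_zero.mp h0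
    have hc : (Polynomial.C c) ^ 2 + Polynomial.C c = 0 := by
      rw [← Polynomial.C_pow, ← Polynomial.C_add]
      have hall : ∀ d : ZMod 2, d ^ 2 + d = 0 := by decide
      rw [hall c, Polynomial.C_0]
    rw [hc] at h
    rw [h, natDegree_zero] at hdP
    omega
  · have hne : n ≠ 0 := fun h0 => by simp [h0] at hpos
    have hdn : (n ^ 2 + n).natDegree = 2 * n.natDegree := by
      rw [natDegree_add_eq_left_of_natDegree_lt (by
        rw [natDegree_pow]; omega), natDegree_pow]
    rw [h, hdn] at hdP
    omega

lemma key (i j : ℕ) (hij : j < i) :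
    ¬ rel2F ((RatFunc.X : RatFunc (ZMod 2)) ^ (2 * i + 1))
        ((RatFunc.X : RatFunc (ZMod 2)) ^ (2 * j + 1)) := by
  rintro ⟨x, hx⟩
  set n := x.num with hn
  set d := x.denom with hd
  have hd0 : (algebraMap (Polynomial (ZMod 2)) (RatFunc (ZMod 2))) d ≠ 0 :=
    RatFunc.algebraMap_ne_zero x.denom_ne_zero
  have hxe : x = algebraMap _ _ n / algebraMap _ _ d := (RatFunc.num_div_denom x).symm
  have hpoly : (Polynomial.X : Polynomial (ZMod 2)) ^ (2*i+1) * d^2 + Polynomial.X ^ (2*j+1) * d^2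
      = n ^ 2 + n * d := by
    apply RatFunc.algebraMap_injective
    push_cast [map_add, map_mul, map_pow, RatFunc.algebraMap_X]
    rw [hxe] at hx
    field_simp at hx
    apply mul_right_cancel₀ hd0
    linear_combination (algebraMap (Polynomial (ZMod 2)) (RatFunc (ZMod 2)) d) * hx
  have hdvd : d ∣ n ^ 2 := ⟨Polynomial.X ^ (2*i+1) * d + Polynomial.X ^ (2*j+1) * d - n, by
    linear_combination -hpoly⟩
  have hunit : IsUnit d := (IsCoprime.pow_left x.isCoprime_num_denom).symm.isUnit_of_dvd hdvd
  have hd1 : d = 1 := x.monic_denom.eq_one_of_isUnit hunit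
  rw [hd1] at hpoly
  exact poly_key n i j hij (by linear_combination hpoly)


lemma rel2F_symm {t t' : RatFunc (ZMod 2)} (h : rel2F t t') : rel2F t' t := by
  obtain ⟨x, hx⟩ := h
  exact ⟨x, by rw [add_comm]; exact hx⟩

theorem rel2_ratfunc_odd_powers_not_equiv :
    (∀ i j : ℕ, i ≠ j →
      ¬ rel2F ((RatFunc.X : RatFunc (ZMod 2)) ^ (2 * i + 1))
          ((RatFunc.X : RatFunc (ZMod 2)) ^ (2 * j + 1))) ∧
    (∀ S : Set (RatFunc (ZMod 2)), (∀ s ∈ S, s ≠ 0) →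
      (∀ t : RatFunc (ZMod 2), t ≠ 0 → ∃! s, s ∈ S ∧ rel2F t s) →
      S.Countable ∧ S.Infinite) := by
  have part1 : ∀ i j : ℕ, i ≠ j →
      ¬ rel2F ((RatFunc.X : RatFunc (ZMod 2)) ^ (2 * i + 1))
          ((RatFunc.X : RatFunc (ZMod 2)) ^ (2 * j + 1)) := by
    intro i j hij
    rcases lt_or_gt_of_ne hij with h | h
    · exact fun hr => key j i h (rel2F_symm hr)
    · exact key i j h
  refine ⟨part1, fun S hS0 hS => ⟨?_, ?_⟩⟩
  · haveI : Countable (Polynomial (ZMod 2)) := by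
      haveI : Countable (AddMonoidAlgebra (ZMod 2) ℕ) := Function.Surjective.countable
        (f := AddMonoidAlgebra.ofCoeff (R := ZMod 2) (M := ℕ)) (fun x => ⟨x.coeff, rfl⟩)
      have : Function.Injective (Polynomial.toFinsupp (R := ZMod 2)) :=
        fun p q h => by cases p; cases q; simpa using h
      exact this.countable
    haveI : Countable (RatFunc (ZMod 2)) := by
      have hs : Function.Surjective
          (fun p : Polynomial (ZMod 2) × Polynomial (ZMod 2) =>
            algebraMap _ (RatFunc (ZMod 2)) p.1 / algebraMap _ _ p.2) :=
        fun x => ⟨(x.num, x.denom), x.num_div_denom⟩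
      exact hs.countable
    exact S.to_countable
  · have hX : ∀ i : ℕ, (RatFunc.X : RatFunc (ZMod 2)) ^ (2*i+1) ≠ 0 :=
      fun i => pow_ne_zero _ RatFunc.X_ne_zero
    have h1 : ∀ i : ℕ, ∃ s, s ∈ S ∧ rel2F ((RatFunc.X : RatFunc (ZMod 2)) ^ (2*i+1)) s :=
      fun i => (hS _ (hX i)).exists
    choose f hf1 hf2 using h1
    have h2 : (2 : RatFunc (ZMod 2)) = 0 := by
      have h2p : (2 : Polynomial (ZMod 2)) = 0 := by
        rw [← map_ofNat (Polynomial.C : ZMod 2 →+* Polynomial (ZMod 2)) 2,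
          show (2 : ZMod 2) = 0 by decide, Polynomial.C_0]
      calc (2 : RatFunc (ZMod 2)) = algebraMap (Polynomial (ZMod 2)) _ 2 := by
            rw [map_ofNat]
        _ = 0 := by rw [h2p, map_zero]
    have hinj : Function.Injective f := by
      intro a b hab
      by_contra hne
      obtain ⟨x, hx⟩ := hf2 a
      obtain ⟨y, hy⟩ := hf2 b
      rw [hab] at hx
      exact part1 a b hne ⟨x + y, by linear_combination hx + hy - (x * y + f b) * h2⟩
    exact Set.infinite_of_injective_forall_mem hinj hf1
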